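/- Lower bound for MCE: if P is a density matrix and Q is symmetric positive definite, then MCE(P,Q) = tr(−P log Q + Q) ≥ −log tr(P Q) + tr(Q). -/

import Mathlib

open Matrix

/-- The principal matrix logarithm of a symmetric real matrix, via the spectral theorem. -/
noncomputable def matLog {n : ℕ} (A : Matrix (Fin n) (Fin n) ℝ) : Matrix (Fin n) (Fin n) ℝ :=
  if h : A.IsHermitian then h.cfc Real.log else 0

/-- Matrix cross-entropy `MCE(P, Q) = tr(−P log Q + Q)`. -/
noncomputable def MCE {n : ℕ} (P Q : Matrix (Fin n) (Fin n) ℝ) : ℝ :=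
  (-(P * matLog Q) + Q).trace

lemma diag_nonneg_of_psd {n : ℕ} {M : Matrix (Fin n) (Fin n) ℝ} (hM : M.PosSemidef)
    (i : Fin n) : 0 ≤ M i i := by
  exact hM.diag_nonneg

lemma trace_mul_conj_diag {n : ℕ} (P U : Matrix (Fin n) (Fin n) ℝ) (d : Fin n → ℝ) :
    (P * (U * diagonal d * star U)).trace = ∑ i, (star U * P * U) i i * d i := by
  have : P * (U * diagonal d * star U) = (P * U) * diagonal d * star U := by
    noncomm_ring
  rw [this, trace_mul_cycle]
  simp [Matrix.trace, Matrix.mul_diagonal, Matrix.diag, mul_assoc]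

/-- Lower bound for MCE: if `P` is a density matrix and `Q` is symmetric
positive definite, then `MCE(P,Q) = tr(−P log Q + Q) ≥ −log tr(P Q) + tr(Q)`. -/
theorem mce_lower_bound {n : ℕ} (P Q : Matrix (Fin n) (Fin n) ℝ)
    (hPsymm : P.IsSymm) (hPpsd : P.PosSemidef) (hPtr : P.trace = 1)
    (hQsymm : Q.IsSymm) (hQpd : Q.PosDef) :
    -Real.log (P * Q).trace + Q.trace ≤ MCE P Q := by
  have hQ : Q.IsHermitian := hQpd.isHermitian
  set U : Matrix (Fin n) (Fin n) ℝ := (hQ.eigenvectorUnitary : Matrix (Fin n) (Fin n) ℝ) with hU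
  set μ : Fin n → ℝ := hQ.eigenvalues with hμ
  set M : Matrix (Fin n) (Fin n) ℝ := star U * P * U with hM
  have hMpsd : M.PosSemidef := by
    rw [hM, star_eq_conjTranspose]
    exact hPpsd.conjTranspose_mul_mul_same U
  have hw_nonneg : ∀ i, 0 ≤ M i i := diag_nonneg_of_psd hMpsd
  have hμpos : ∀ i, 0 < μ i := hQpd.eigenvalues_pos
  -- trace M = 1
  have hMtr : ∑ i, M i i = 1 := by
    have : M.trace = P.trace := by
      have hUU : U * star U = 1 := (Matrix.mem_unitaryGroup_iff).mp hQ.eigenvectorUnitary.2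
      rw [hM, trace_mul_cycle, hUU, one_mul]
    simpa [Matrix.trace, Matrix.diag, hPtr] using this.trans hPtr
  -- tr(P Q) = ∑ M i i * μ i
  have hofReal : (RCLike.ofReal : ℝ → ℝ) = id := rfl
  have hPQ : (P * Q).trace = ∑ i, M i i * μ i := by
    conv_lhs => rw [hQ.spectral_theorem]
    rw [hofReal]
    simpa using trace_mul_conj_diag P U μ
  -- tr(P log Q) = ∑ M i i * log (μ i)
  have hPlog : (P * matLog Q).trace = ∑ i, M i i * Real.log (μ i) := by
    rw [matLog, dif_pos hQ, Matrix.IsHermitian.cfc, hofReal]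
    simpa [Function.comp] using trace_mul_conj_diag P U (Real.log ∘ μ)
  -- Jensen
  have hjensen : ∑ i, M i i * Real.log (μ i) ≤ Real.log (∑ i, M i i * μ i) := by
    have := (strictConcaveOn_log_Ioi.concaveOn).le_map_sum
      (t := Finset.univ) (w := fun i => M i i) (p := μ)
      (fun i _ => hw_nonneg i) hMtr (fun i _ => hμpos i)
    simpa [smul_eq_mul] using this
  rw [MCE, Matrix.trace_add, Matrix.trace_neg, hPlog]
  rw [hPQ]
  have := hjensen
  linarith
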